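/- (Nielsen identity for two-index Hermite polynomials) For all natural numbers m, r, n with n ≥ 1 and ν ≤ min(r, n) in the inner range, and for all real x ≠ 0, H_{m+r,n}(x) = m!·r!·n·n! · Σ_{k=0}^{m} Σ_{ν=0}^{k} Σ_{j=0}^{ν} α_{j,ν} · ((n+k−ν−1)! / ((k−ν)!·ν!)) · ((−x)^ν / x^{n+k}) · (H_{m−k,n}(x) / ((m−k)!·n!)) · (H_{r−ν+j,n−j}(x) / ((r−ν+j)!·(n−j)!)), where the inner sums are understood with the convention that terms with ν > r or j > n vanish (H_{a,b} = 0 when an index is negative). -/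

import Mathlib

open Polynomial Finset

/-- The operator `A p = 2·X·p − p′`. -/
noncomputable def A (p : ℝ[X]) : ℝ[X] := 2 * X * p - derivative p

/-- The two-index Hermite polynomial `H_{m,n} = A^m (X^n)`. -/
noncomputable def H (m n : ℕ) : ℝ[X] := A^[m] (X ^ n)
/-- Two-index Hermite polynomials with integer indices, with the convention
that `Hz a b = 0` whenever one of the indices is negative. -/
noncomputable def Hz (a b : ℤ) : ℝ[X] :=
  if a < 0 ∨ b < 0 then 0 else A^[a.toNat] (X ^ b.toNat)

/-- The coefficients `α_{j,ν}`: `α_{0,ν} = 2^ν`, `α_{ν,ν} = 1`, and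
`α_{j,ν} = 2·α_{j,ν−1} + α_{j−1,ν−1}` for `1 ≤ j < ν`. -/
def alpha : ℕ → ℕ → ℕ
  | 0, ν => 2 ^ ν
  | _ + 1, 0 => 1
  | j + 1, ν + 1 =>
      if j + 1 = ν + 1 then 1 else 2 * alpha (j + 1) ν + alpha j ν


lemma A_add (p q : ℝ[X]) : A (p + q) = A p + A q := by
  simp only [A, derivative_add]; ring

lemma A_smul (c : ℝ) (p : ℝ[X]) : A (c • p) = c • A p := by
  simp only [A, Polynomial.smul_eq_C_mul, derivative_C_mul]; ring

lemma H_succ (m n : ℕ) : H (m + 1) n = A (H m n) := by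
  simp [H, Function.iterate_succ_apply']

lemma derivative_A (p : ℝ[X]) : derivative (A p) = 2 * p + A (derivative p) := by
  simp only [A, derivative_sub, derivative_mul, derivative_X, derivative_ofNat]
  ring

lemma dH (m n : ℕ) :
    derivative (H m n) = (2 * (m : ℝ)) • H (m - 1) n + (n : ℝ) • H m (n - 1) := by
  induction m with
  | zero =>
      simp [H, derivative_X_pow, Polynomial.smul_eq_C_mul]
  | succ m ih =>
      rw [H_succ, derivative_A, ih, A_add, A_smul, A_smul]
      have h1 : (2 * (m : ℝ)) • A (H (m - 1) n) = (2 * (m : ℝ)) • H m n := by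
        cases m with
        | zero => simp
        | succ m' => rw [← H_succ]; norm_num
      rw [h1, ← H_succ]
      have : (m + 1 : ℕ) - 1 = m := rfl
      rw [this]
      push_cast
      rw [show (2 : ℝ[X]) * H m n = (2:ℝ) • H m n from by
        rw [Polynomial.smul_eq_C_mul]; norm_cast]
      module

lemma Hz_of_nonneg {a b : ℤ} (ha : 0 ≤ a) (hb : 0 ≤ b) :
    Hz a b = H a.toNat b.toNat := by
  simp [Hz, H, not_lt.mpr ha, not_lt.mpr hb]

lemma Hz_natCast (p q : ℕ) : Hz (p : ℤ) (q : ℤ) = H p q := by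
  rw [Hz_of_nonneg (by positivity) (by positivity)]; simp

lemma Hz_neg {a b : ℤ} (h : a < 0 ∨ b < 0) : Hz a b = 0 := by
  simp [Hz, h]

lemma dHz (a b : ℤ) :
    derivative (Hz a b) = (2 * (a : ℝ)) • Hz (a - 1) b + (b : ℝ) • Hz a (b - 1) := by
  rcases lt_or_ge a 0 with ha | ha
  · rw [Hz_neg (Or.inl ha), Hz_neg (Or.inl (by omega)), Hz_neg (Or.inl ha)]; simp
  rcases lt_or_ge b 0 with hb | hb
  · rw [Hz_neg (Or.inr hb), Hz_neg (Or.inr hb), Hz_neg (Or.inr (by omega))]; simp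
  rw [Hz_of_nonneg ha hb, dH]
  have e1 : ((2 : ℝ) * (a.toNat : ℕ)) • H (a.toNat - 1) b.toNat
      = (2 * (a : ℝ)) • Hz (a - 1) b := by
    rcases eq_or_lt_of_le ha with ha0 | ha0
    · simp [← ha0]
    · rw [Hz_of_nonneg (by omega) hb, show (a - 1).toNat = a.toNat - 1 by omega,
        show ((a.toNat : ℕ) : ℝ) = ((a : ℤ) : ℝ) from by
          exact_mod_cast congrArg (Int.cast : ℤ → ℝ) (Int.toNat_of_nonneg ha)]
  have e2 : ((b.toNat : ℕ) : ℝ) • H a.toNat (b.toNat - 1)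
      = ((b : ℤ) : ℝ) • Hz a (b - 1) := by
    rcases eq_or_lt_of_le hb with hb0 | hb0
    · simp [← hb0]
    · rw [Hz_of_nonneg ha (by omega), show (b - 1).toNat = b.toNat - 1 by omega,
        show ((b.toNat : ℕ) : ℝ) = ((b : ℤ) : ℝ) from by
          exact_mod_cast congrArg (Int.cast : ℤ → ℝ) (Int.toNat_of_nonneg hb)]
  rw [e1, e2]

/-- Real "descending factorial" with integer start. -/
noncomputable def df (a : ℤ) (t : ℕ) : ℝ := ∏ i ∈ range t, ((a : ℝ) - i)

lemma df_zero (a : ℤ) : df a 0 = 1 := by simp [df]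

lemma df_succ (a : ℤ) (t : ℕ) : df a (t + 1) = df a t * ((a : ℝ) - t) := by
  simp [df, prod_range_succ]

/-- coefficient in dpow -/
noncomputable def cc (a b : ℤ) (ν j : ℕ) : ℝ :=
  (2 : ℝ) ^ (ν - j) * (ν.choose j : ℝ) * df a (ν - j) * df b j

noncomputable def PP (a b : ℤ) (ν j : ℕ) : ℝ :=
  (2 : ℝ) ^ (ν + 1 - j) * (ν.choose j : ℝ) * df a (ν + 1 - j) * df b j

noncomputable def QQ (a b : ℤ) (ν j : ℕ) : ℝ :=
  (2 : ℝ) ^ (ν - j) * (ν.choose j : ℝ) * df a (ν - j) * df b (j + 1)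

lemma K1 (a b : ℤ) (ν j : ℕ) (hj : j ≤ ν) :
    2 * ((a : ℝ) - ν + j) * cc a b ν j = PP a b ν j := by
  have h1 : (a : ℝ) - ν + j = (a : ℝ) - ((ν - j : ℕ) : ℝ) := by
    rw [Nat.cast_sub hj]; ring
  have h2 : ν + 1 - j = (ν - j) + 1 := by omega
  rw [h1, cc, PP, h2, df_succ, pow_succ]
  ring

lemma K2 (a b : ℤ) (ν j : ℕ) :
    ((b : ℝ) - j) * cc a b ν j = QQ a b ν j := by
  rw [cc, QQ, df_succ]; ring

lemma K3 (a b : ℤ) (ν j : ℕ) (hj : j ≤ ν) :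
    cc a b (ν + 1) (j + 1) = PP a b ν (j + 1) + QQ a b ν j := by
  have h1 : ν + 1 - (j + 1) = ν - j := by omega
  rw [cc, PP, QQ, h1, Nat.choose_succ_succ, Nat.cast_add]
  ring

lemma K4 (a b : ℤ) (ν : ℕ) : cc a b (ν + 1) 0 = PP a b ν 0 := by
  simp [cc, PP]

lemma K5 (a b : ℤ) (ν : ℕ) : PP a b ν (ν + 1) = 0 := by
  simp [PP, Nat.choose_succ_self]

lemma dpow (a b : ℤ) (ν : ℕ) :
    derivative^[ν] (Hz a b) =
      ∑ j ∈ range (ν + 1), cc a b ν j • Hz (a - ν + j) (b - j) := by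
  induction ν with
  | zero => simp [cc, df_zero]
  | succ ν ih =>
      rw [Function.iterate_succ_apply', ih, map_sum]
      have step : ∀ j ∈ range (ν + 1),
          derivative (cc a b ν j • Hz (a - ν + j) (b - j)) =
            (2 * ((a : ℝ) - ν + j) * cc a b ν j) • Hz (a - (↑(ν+1) : ℤ) + j) (b - j)
            + (((b : ℝ) - j) * cc a b ν j) • Hz (a - (↑(ν+1) : ℤ) + (↑(j+1) : ℤ)) (b - (↑(j+1) : ℤ)) := by
        intro j hj
        rw [derivative_smul, dHz, smul_add, smul_smul, smul_smul,
          show a - (ν : ℤ) + j - 1 = a - (↑(ν+1) : ℤ) + j from by push_cast; ring,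
          show b - (j : ℤ) - 1 = b - (↑(j+1) : ℤ) from by push_cast; ring,
          show a - (ν : ℤ) + j = a - (↑(ν+1) : ℤ) + (↑(j+1) : ℤ) from by push_cast; ring]
        push_cast
        module
      rw [Finset.sum_congr rfl step, Finset.sum_add_distrib]
      have hA : ∑ j ∈ range (ν+1),
            (2 * ((a : ℝ) - ν + j) * cc a b ν j) • Hz (a - (↑(ν+1) : ℤ) + j) (b - j)
          = ∑ j ∈ range (ν+1), PP a b ν j • Hz (a - (↑(ν+1) : ℤ) + j) (b - j) :=
        Finset.sum_congr rfl fun j hj => by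
          rw [K1 a b ν j (by simpa [Nat.lt_succ_iff] using hj)]
      have hB : ∑ j ∈ range (ν+1),
            (((b : ℝ) - j) * cc a b ν j) • Hz (a - (↑(ν+1) : ℤ) + (↑(j+1) : ℤ)) (b - (↑(j+1) : ℤ))
          = ∑ j ∈ range (ν+1), QQ a b ν j • Hz (a - (↑(ν+1) : ℤ) + (↑(j+1) : ℤ)) (b - (↑(j+1) : ℤ)) :=
        Finset.sum_congr rfl fun j hj => by rw [K2]
      rw [hA, hB]
      rw [Finset.sum_range_succ' (fun j => cc a b (ν+1) j • Hz (a - (↑(ν+1) : ℤ) + j) (b - j)) (ν+1)]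
      have hsplit : ∀ j ∈ range (ν+1),
          cc a b (ν+1) (j+1) • Hz (a - (↑(ν+1) : ℤ) + (↑(j+1) : ℤ)) (b - (↑(j+1) : ℤ))
            = PP a b ν (j+1) • Hz (a - (↑(ν+1) : ℤ) + (↑(j+1) : ℤ)) (b - (↑(j+1) : ℤ))
              + QQ a b ν j • Hz (a - (↑(ν+1) : ℤ) + (↑(j+1) : ℤ)) (b - (↑(j+1) : ℤ)) := by
        intro j hj
        rw [K3 a b ν j (by simpa [Nat.lt_succ_iff] using hj), add_smul]
      rw [Finset.sum_congr rfl hsplit, Finset.sum_add_distrib, K4]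
      have hP : ∑ j ∈ range (ν+1),
            PP a b ν (j+1) • Hz (a - (↑(ν+1) : ℤ) + (↑(j+1) : ℤ)) (b - (↑(j+1) : ℤ))
            + PP a b ν 0 • Hz (a - (↑(ν+1) : ℤ) + (↑(0:ℕ) : ℤ)) (b - (↑(0:ℕ) : ℤ))
          = ∑ j ∈ range (ν+1), PP a b ν j • Hz (a - (↑(ν+1) : ℤ) + j) (b - j) := by
        rw [← Finset.sum_range_succ' (fun j => PP a b ν j • Hz (a - (↑(ν+1) : ℤ) + j) (b - j)) (ν+1),
          Finset.sum_range_succ, K5]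
        simp
      rw [add_right_comm, hP]

noncomputable def G (r n : ℕ) : ℕ → ℝ[X]
  | 0 => H r n
  | k + 1 => X * derivative (G r n k) - ((n : ℝ) + k) • G r n k

/-- per-term algebraic identity used in the induction for `star` -/
lemma Lterm (n t k : ℕ) (p q : ℝ[X]) :
    2 * X ^ 2 * (X ^ t * p * q) - X * derivative (X ^ t * p * q)
        + (((n : ℝ) + t) + k) • (X ^ t * p * q)
      = X ^ (t + 1) * (2 * X * p - derivative p) * q
        - X ^ t * p * (X * derivative q - ((n : ℝ) + k) • q) := by
  cases t with
  | zero =>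
      simp only [pow_zero, one_mul, derivative_mul, Nat.cast_zero, add_zero, pow_one,
        Polynomial.smul_eq_C_mul, C_add]
      ring
  | succ s =>
      simp only [derivative_mul, derivative_X_pow, Polynomial.smul_eq_C_mul, C_add,
        Nat.cast_succ, Nat.add_sub_cancel]
      push_cast
      ring

/-- multiplying the `H`-recurrence by a power of `X` -/
lemma Mterm (s : ℕ) (p : ℝ[X]) :
    X ^ (s + 1) * X * (2 * X * p - derivative p)
      = 2 * X ^ 2 * (X ^ (s + 1) * p)
        - (X * derivative (X ^ (s + 1) * p) - ((s : ℝ) + 1) • (X ^ (s + 1) * p)) := by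
  simp only [derivative_mul, derivative_X_pow, Polynomial.smul_eq_C_mul, C_add,
    Nat.cast_succ, Nat.add_sub_cancel]
  push_cast
  ring

lemma star (r n : ℕ) (hn : 1 ≤ n) (m : ℕ) :
    X ^ (n + m) * H (m + r) n =
      ∑ k ∈ range (m + 1),
        ((m.choose k : ℝ) * (-1) ^ k) • (X ^ (m - k) * H (m - k) n * G r n k) := by
  induction m with
  | zero => simp [G, H]
  | succ m ih =>
      have e1 : X ^ (n + (m+1)) * H (m + 1 + r) n
          = 2 * X ^ 2 * (X ^ (n+m) * H (m+r) n)
            - (X * derivative (X ^ (n+m) * H (m+r) n)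
                - ((n : ℝ) + m) • (X ^ (n+m) * H (m+r) n)) := by
        have h2 : H (m + 1 + r) n = 2 * X * H (m+r) n - derivative (H (m+r) n) := by
          rw [show m + 1 + r = (m + r) + 1 by omega, H_succ, A]
        have hM := Mterm (n + m - 1) (H (m+r) n)
        rw [show (n + m - 1) + 1 = n + m by omega,
          show (((n + m - 1 : ℕ) : ℝ)) + 1 = (n : ℝ) + m from by
            push_cast [Nat.cast_sub (show 1 ≤ n + m by omega)]; ring] at hM
        rw [show n + (m+1) = (n+m) + 1 by omega, pow_succ, h2, hM]
      rw [e1, ih, map_sum, Finset.mul_sum, Finset.mul_sum, Finset.smul_sum,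
        ← Finset.sum_sub_distrib, ← Finset.sum_sub_distrib]
      have key : ∀ k ∈ range (m + 1),
          2 * X ^ 2 * (((m.choose k : ℝ) * (-1) ^ k) • (X ^ (m - k) * H (m - k) n * G r n k))
            - (X * derivative (((m.choose k : ℝ) * (-1) ^ k) • (X ^ (m - k) * H (m - k) n * G r n k))
              - ((n : ℝ) + m) • (((m.choose k : ℝ) * (-1) ^ k) • (X ^ (m - k) * H (m - k) n * G r n k)))
          = ((m.choose k : ℝ) * (-1) ^ k) • (X ^ (m + 1 - k) * H (m + 1 - k) n * G r n k)
            - ((m.choose k : ℝ) * (-1) ^ k) • (X ^ (m - k) * H (m - k) n * G r n (k+1)) := by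
        intro k hk
        have hk' : k ≤ m := by simpa [Nat.lt_succ_iff] using hk
        have hL := Lterm n (m-k) k (H (m-k) n) (G r n k)
        rw [show (m-k)+1 = m+1-k by omega,
          show 2 * X * H (m-k) n - derivative (H (m-k) n) = H (m+1-k) n from by
            rw [show m+1-k = (m-k)+1 by omega, H_succ, A],
          show X * derivative (G r n k) - ((n : ℝ) + k) • G r n k = G r n (k+1) from rfl] at hL
        rw [show (n : ℝ) + (m : ℝ) = ((n : ℝ) + ((m - k : ℕ) : ℝ)) + (k : ℝ) from by
          push_cast [Nat.cast_sub hk']; ring]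
        rw [derivative_smul, mul_smul_comm, mul_smul_comm, smul_comm (((n : ℝ) + ((m - k : ℕ) : ℝ)) + (k : ℝ)),
          ← smul_sub, ← smul_sub, ← smul_sub]
        congr 1
        linear_combination hL
      rw [Finset.sum_congr rfl key, Finset.sum_sub_distrib]
      -- now handle the RHS sum over range (m+2) via Pascal
      rw [Finset.sum_range_succ' (fun k => (((m+1).choose k : ℝ) * (-1) ^ k) •
            (X ^ (m + 1 - k) * H (m + 1 - k) n * G r n k)) (m+1)]
      have hsplit : ∀ j ∈ range (m+1),
          (((m+1).choose (j+1) : ℝ) * (-1) ^ (j+1)) •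
              (X ^ (m + 1 - (j+1)) * H (m + 1 - (j+1)) n * G r n (j+1))
            = ((m.choose (j+1) : ℝ) * (-1) ^ (j+1)) •
                (X ^ (m + 1 - (j+1)) * H (m + 1 - (j+1)) n * G r n (j+1))
              - ((m.choose j : ℝ) * (-1) ^ j) •
                (X ^ (m - j) * H (m - j) n * G r n (j+1)) := by
        intro j hj
        rw [show m + 1 - (j+1) = m - j by omega, Nat.choose_succ_succ, Nat.cast_add]
        module
      rw [Finset.sum_congr rfl hsplit, Finset.sum_sub_distrib]
      have hP : ∑ j ∈ range (m+1), ((m.choose (j+1) : ℝ) * (-1) ^ (j+1)) •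
            (X ^ (m + 1 - (j+1)) * H (m + 1 - (j+1)) n * G r n (j+1))
            + (((m+1).choose 0 : ℝ) * (-1) ^ (0:ℕ)) •
              (X ^ (m + 1 - 0) * H (m + 1 - 0) n * G r n 0)
          = ∑ k ∈ range (m+1), ((m.choose k : ℝ) * (-1) ^ k) •
              (X ^ (m + 1 - k) * H (m + 1 - k) n * G r n k) := by
        have h0 : (((m+1).choose 0 : ℝ) * (-1) ^ (0:ℕ)) •
              (X ^ (m + 1 - 0) * H (m + 1 - 0) n * G r n 0)
            = ((m.choose 0 : ℝ) * (-1) ^ (0:ℕ)) •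
              (X ^ (m + 1 - 0) * H (m + 1 - 0) n * G r n 0) := by simp
        rw [h0, ← Finset.sum_range_succ' (fun k => ((m.choose k : ℝ) * (-1) ^ k) •
              (X ^ (m + 1 - k) * H (m + 1 - k) n * G r n k)) (m+1),
          Finset.sum_range_succ, Nat.choose_succ_self]
        simp
      linear_combination (-1 : ℝ[X]) * hP

lemma Lterm2 (c : ℝ) (ν : ℕ) (p : ℝ[X]) :
    X * derivative (X ^ ν * p) - c • (X ^ ν * p)
      = X ^ (ν + 1) * derivative p - ((c - ν) • (X ^ ν * p)) := by
  cases ν with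
  | zero => simp [Polynomial.smul_eq_C_mul]
  | succ s =>
      simp only [derivative_mul, derivative_X_pow, Polynomial.smul_eq_C_mul, C_sub, C_add,
        Nat.cast_succ, Nat.add_sub_cancel]
      push_cast
      ring

lemma Gexpand (r n k : ℕ) :
    G r n k = ∑ ν ∈ range (k + 1),
      ((-1 : ℝ) ^ (k - ν) * (Nat.ascFactorial n (k - ν) : ℝ) * (k.choose ν : ℝ)) •
        (X ^ ν * derivative^[ν] (H r n)) := by
  induction k with
  | zero => simp [G]
  | succ k ih =>
      have hG : G r n (k+1) = X * derivative (G r n k) - ((n : ℝ) + k) • G r n k := rfl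
      rw [hG, ih, map_sum, Finset.mul_sum, Finset.smul_sum, ← Finset.sum_sub_distrib]
      have key : ∀ ν ∈ range (k + 1),
          X * derivative (((-1 : ℝ) ^ (k - ν) * (Nat.ascFactorial n (k - ν) : ℝ) * (k.choose ν : ℝ)) •
              (X ^ ν * derivative^[ν] (H r n)))
            - ((n : ℝ) + k) • (((-1 : ℝ) ^ (k - ν) * (Nat.ascFactorial n (k - ν) : ℝ) * (k.choose ν : ℝ)) •
              (X ^ ν * derivative^[ν] (H r n)))
          = ((-1 : ℝ) ^ (k + 1 - ν) * (Nat.ascFactorial n (k + 1 - ν) : ℝ) * (k.choose ν : ℝ)) •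
              (X ^ ν * derivative^[ν] (H r n))
            + ((-1 : ℝ) ^ (k - ν) * (Nat.ascFactorial n (k - ν) : ℝ) * (k.choose ν : ℝ)) •
              (X ^ (ν + 1) * derivative^[ν+1] (H r n)) := by
        intro ν hν
        have hν' : ν ≤ k := by simpa [Nat.lt_succ_iff] using hν
        rw [derivative_smul, mul_smul_comm, smul_comm ((n : ℝ) + k), ← smul_sub,
          Lterm2 ((n : ℝ) + k) ν (derivative^[ν] (H r n)),
          show derivative (derivative^[ν] (H r n)) = derivative^[ν+1] (H r n) from
            (Function.iterate_succ_apply' derivative ν (H r n)).symm]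
        have hc : ((n : ℝ) + k) - ν = ((n + (k - ν) : ℕ) : ℝ) := by
          push_cast [Nat.cast_sub hν']; ring
        have hasc : ((Nat.ascFactorial n (k + 1 - ν) : ℕ) : ℝ)
            = ((n + (k - ν) : ℕ) : ℝ) * (Nat.ascFactorial n (k - ν) : ℝ) := by
          rw [show k + 1 - ν = (k - ν) + 1 by omega, Nat.ascFactorial_succ]
          push_cast; ring
        rw [hc, hasc, show k + 1 - ν = (k - ν) + 1 by omega, pow_succ, smul_sub]
        module
      rw [Finset.sum_congr rfl key, Finset.sum_add_distrib]
      rw [Finset.sum_range_succ' (fun ν => ((-1 : ℝ) ^ (k + 1 - ν) *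
            (Nat.ascFactorial n (k + 1 - ν) : ℝ) * ((k+1).choose ν : ℝ)) •
            (X ^ ν * derivative^[ν] (H r n))) (k+1)]
      have hsplit : ∀ ν ∈ range (k+1),
          ((-1 : ℝ) ^ (k + 1 - (ν+1)) * (Nat.ascFactorial n (k + 1 - (ν+1)) : ℝ) *
              ((k+1).choose (ν+1) : ℝ)) • (X ^ (ν+1) * derivative^[ν+1] (H r n))
            = ((-1 : ℝ) ^ (k + 1 - (ν+1)) * (Nat.ascFactorial n (k + 1 - (ν+1)) : ℝ) *
                (k.choose (ν+1) : ℝ)) • (X ^ (ν+1) * derivative^[ν+1] (H r n))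
              + ((-1 : ℝ) ^ (k - ν) * (Nat.ascFactorial n (k - ν) : ℝ) *
                (k.choose ν : ℝ)) • (X ^ (ν+1) * derivative^[ν+1] (H r n)) := by
        intro ν hν
        rw [show k + 1 - (ν+1) = k - ν by omega, Nat.choose_succ_succ, Nat.cast_add]
        module
      rw [Finset.sum_congr rfl hsplit, Finset.sum_add_distrib]
      have hP : ∑ ν ∈ range (k+1), ((-1 : ℝ) ^ (k + 1 - (ν+1)) *
            (Nat.ascFactorial n (k + 1 - (ν+1)) : ℝ) * (k.choose (ν+1) : ℝ)) •
              (X ^ (ν+1) * derivative^[ν+1] (H r n))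
            + ((-1 : ℝ) ^ (k + 1 - 0) * (Nat.ascFactorial n (k + 1 - 0) : ℝ) *
              ((k+1).choose 0 : ℝ)) • (X ^ 0 * derivative^[0] (H r n))
          = ∑ ν ∈ range (k+1), ((-1 : ℝ) ^ (k + 1 - ν) *
              (Nat.ascFactorial n (k + 1 - ν) : ℝ) * (k.choose ν : ℝ)) •
              (X ^ ν * derivative^[ν] (H r n)) := by
        have h0 : (((k+1).choose 0 : ℕ) : ℝ) = ((k.choose 0 : ℕ) : ℝ) := by simp
        rw [h0, ← Finset.sum_range_succ' (fun ν => ((-1 : ℝ) ^ (k + 1 - ν) *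
              (Nat.ascFactorial n (k + 1 - ν) : ℝ) * (k.choose ν : ℝ)) •
              (X ^ ν * derivative^[ν] (H r n))) (k+1),
          Finset.sum_range_succ, Nat.choose_succ_self]
        simp
      linear_combination (-1 : ℝ[X]) * hP

lemma alpha_eq : ∀ ν j, j ≤ ν → alpha j ν = 2 ^ (ν - j) * ν.choose j := by
  intro ν
  induction ν with
  | zero =>
      intro j hj
      interval_cases j
      simp [alpha]
  | succ ν ih =>
      intro j hj
      match j with
      | 0 => simp [alpha]
      | j + 1 =>
        rw [alpha]
        by_cases h : j + 1 = ν + 1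
        · rw [if_pos h, h]
          simp [Nat.choose_self]
        · rw [if_neg h]
          have hj' : j + 1 ≤ ν := by omega
          rw [ih (j+1) hj', ih j (by omega),
            show ν + 1 - (j + 1) = ν - j by omega,
            show ν - j = (ν - (j+1)) + 1 by omega, pow_succ,
            Nat.choose_succ_succ]
          ring

lemma df_cast (p t : ℕ) (h : t ≤ p) : df (p : ℤ) t = (p.descFactorial t : ℝ) := by
  induction t with
  | zero => simp [df_zero]
  | succ t iht =>
      rw [df_succ, iht (by omega), Nat.descFactorial_succ, Nat.cast_mul,
        Nat.cast_sub (by omega : t ≤ p)]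
      push_cast
      ring


set_option maxHeartbeats 1600000 in
theorem hmn_nielsen (m r n : ℕ) (hn : 1 ≤ n) (x : ℝ) (hx : x ≠ 0) :
    (H (m + r) n).eval x =
      (m.factorial : ℝ) * (r.factorial : ℝ) * (n : ℝ) * (n.factorial : ℝ) *
        ∑ k ∈ range (m + 1), ∑ ν ∈ range (k + 1), ∑ j ∈ range (ν + 1),
          (alpha j ν : ℝ) *
            (((n + k - ν - 1).factorial : ℝ) /
              (((k - ν).factorial : ℝ) * (ν.factorial : ℝ))) *
            ((-x) ^ ν / x ^ (n + k)) *
            ((H (m - k) n).eval x / (((m - k).factorial : ℝ) * (n.factorial : ℝ))) *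
            ((Hz ((r : ℤ) - ν + j) ((n : ℤ) - j)).eval x /
              ((((r : ℤ) - ν + j).toNat.factorial : ℝ) *
                (((n : ℤ) - j).toNat.factorial : ℝ))) := by
  have F : ∀ t : ℕ, ((t.factorial : ℕ) : ℝ) ≠ 0 := fun t =>
    Nat.cast_ne_zero.mpr t.factorial_ne_zero
  have hxnm : x ^ (n + m) ≠ 0 := pow_ne_zero _ hx
  apply mul_left_cancel₀ hxnm
  have hstar := congrArg (eval x) (star r n hn m)
  simp only [eval_mul, eval_pow, eval_X, eval_finset_sum, eval_smul, smul_eq_mul] at hstar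
  rw [hstar]
  have hGE : ∀ k, (G r n k).eval x = ∑ ν ∈ range (k + 1),
      ((-1 : ℝ) ^ (k - ν) * (Nat.ascFactorial n (k - ν) : ℝ) * (k.choose ν : ℝ)) *
        (x ^ ν * ∑ j ∈ range (ν + 1),
          cc (r : ℤ) (n : ℤ) ν j * (Hz ((r : ℤ) - ν + j) ((n : ℤ) - j)).eval x) := by
    intro k
    have hg := congrArg (eval x) (Gexpand r n k)
    simp only [eval_finset_sum, eval_smul, eval_mul, eval_pow, eval_X, smul_eq_mul] at hg
    rw [hg]
    refine Finset.sum_congr rfl fun ν _ => ?_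
    congr 2
    have h2 := congrArg (eval x) (dpow (r : ℤ) (n : ℤ) ν)
    rw [Hz_natCast] at h2
    simpa [eval_finset_sum, eval_smul, smul_eq_mul] using h2
  rw [Finset.sum_congr rfl fun k (_ : k ∈ range (m+1)) => by rw [hGE k]]
  simp only [Finset.mul_sum]
  refine Finset.sum_congr rfl fun k hk => ?_
  refine Finset.sum_congr rfl fun ν hν => ?_
  refine Finset.sum_congr rfl fun j hj => ?_
  have hkm : k ≤ m := by have := Finset.mem_range.mp hk; omega
  have hνk : ν ≤ k := by have := Finset.mem_range.mp hν; omega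
  have hjν : j ≤ ν := by have := Finset.mem_range.mp hj; omega
  by_cases hok : ν ≤ r + j ∧ j ≤ n
  · obtain ⟨hok1, hok2⟩ := hok
    have ht1 : ((r : ℤ) - ν + j).toNat = r + j - ν := by omega
    have ht2 : ((n : ℤ) - j).toNat = n - j := by omega
    rw [ht1, ht2]
    simp only [cc]
    rw [df_cast r (ν - j) (by omega), df_cast n j hok2]
    -- factorial quotient facts
    have hC1 : (m.choose k : ℝ) = (m.factorial : ℝ) / ((k.factorial : ℝ) * ((m - k).factorial : ℝ)) := by
      rw [eq_div_iff (mul_ne_zero (F k) (F (m - k))), ← mul_assoc]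
      exact_mod_cast Nat.choose_mul_factorial_mul_factorial hkm
    have hC2 : (k.choose ν : ℝ) = (k.factorial : ℝ) / ((ν.factorial : ℝ) * ((k - ν).factorial : ℝ)) := by
      rw [eq_div_iff (mul_ne_zero (F ν) (F (k - ν))), ← mul_assoc]
      exact_mod_cast Nat.choose_mul_factorial_mul_factorial hνk
    have hdr : (r.descFactorial (ν - j) : ℝ) = (r.factorial : ℝ) / (((r + j - ν).factorial : ℝ)) := by
      rw [eq_div_iff (F _)]
      have h := Nat.factorial_mul_descFactorial (show ν - j ≤ r by omega)
      rw [show r - (ν - j) = r + j - ν by omega] at h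
      rw [mul_comm]
      exact_mod_cast h
    have hdn : (n.descFactorial j : ℝ) = (n.factorial : ℝ) / (((n - j).factorial : ℝ)) := by
      rw [eq_div_iff (F _)]
      have h := Nat.factorial_mul_descFactorial hok2
      rw [mul_comm]
      exact_mod_cast h
    have hasc : (Nat.ascFactorial n (k - ν) : ℝ)
        = (((n + k - ν - 1).factorial : ℝ)) / (((n - 1).factorial : ℝ)) := by
      rw [eq_div_iff (F _)]
      have h := Nat.factorial_mul_ascFactorial' n (k - ν) (by omega)
      rw [show n + (k - ν) - 1 = n + k - ν - 1 by omega] at h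
      rw [mul_comm]
      exact_mod_cast h
    have hnr : (n : ℝ) = (n.factorial : ℝ) / ((n - 1).factorial : ℝ) := by
      rw [eq_div_iff (F _)]
      exact_mod_cast Nat.mul_factorial_pred (show n ≠ 0 by omega)
    have halpha : (alpha j ν : ℝ) = (2 : ℝ) ^ (ν - j) * (ν.choose j : ℝ) := by
      rw [alpha_eq ν j hjν]
      push_cast
      ring
    have hxe : x ^ (n + m) = x ^ (m - k) * x ^ (n + k) := by
      rw [← pow_add]
      congr 1
      omega
    have hm1k : ((-1 : ℝ)) ^ k = (-1 : ℝ) ^ (k - ν) * (-1 : ℝ) ^ ν := by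
      rw [← pow_add]
      congr 1
      omega
    rw [hC1, hC2, hdr, hdn, hasc, hnr, halpha, hxe, hm1k, neg_pow x ν]
    rcases Nat.even_or_odd (k - ν) with he | he <;>
      rcases Nat.even_or_odd ν with he2 | he2 <;>
      simp only [he.neg_one_pow, he2.neg_one_pow] <;>
      field_simp [F] <;>
      ring
  · have hzero : Hz ((r : ℤ) - ν + j) ((n : ℤ) - j) = 0 := by
      refine Hz_neg ?_
      omega
    rw [hzero]
    simp
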